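/- Let f ∈ L¹([−π,π]) with f = f_R + i·f_I, where f_R and f_I are real-valued and f_R is essentially positive, let A_n(f) ∈ ℝ^{n×n} be the Toeplitz matrix generated by f, let A_R = A_n(f_R), let Y_n be the n×n exchange matrix, and let E_n = A_R^{-1/2} A_n(f) A_R^{-1/2} − I_n. Then the matrix Y_n E_n is symmetric and skew-centrosymmetric, i.e., (Y_n E_n)^T = Y_n E_n and (Y_n E_n) Y_n = −Y_n (Y_n E_n). -/

import Mathlib

open MeasureTheory Matrix Filter

/-- The `k`-th Fourier coefficient of `f : [-π,π] → ℂ`. -/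
noncomputable def fCoeff (f : ℝ → ℂ) (k : ℤ) : ℂ :=
  (1 / (2 * Real.pi)) * ∫ θ in (-Real.pi)..Real.pi, f θ * Complex.exp (-Complex.I * k * θ)

/-- The `n × n` Toeplitz matrix generated by `f`, with entries `a_{j-k}`. -/
noncomputable def toeplitzC (n : ℕ) (f : ℝ → ℂ) : Matrix (Fin n) (Fin n) ℂ :=
  Matrix.of fun j k => fCoeff f ((j : ℤ) - (k : ℤ))

/-- The `n × n` exchange matrix, with ones on the main anti-diagonal. -/
def exchange (n : ℕ) : Matrix (Fin n) (Fin n) ℝ :=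
  Matrix.of fun j k => if (j : ℕ) + (k : ℕ) + 1 = n then 1 else 0

lemma exchange_apply (n : ℕ) (j k : Fin n) :
    exchange n j k = if k = j.rev then 1 else 0 := by
  have hj := j.isLt; have hk := k.isLt
  simp only [exchange, Matrix.of_apply]
  congr 1
  simp only [eq_iff_iff, Fin.ext_iff, Fin.val_rev]
  omega

lemma exchange_mul (n : ℕ) (M : Matrix (Fin n) (Fin n) ℝ) (j l : Fin n) :
    (exchange n * M) j l = M j.rev l := by
  rw [Matrix.mul_apply]
  simp [exchange_apply, ite_mul]

lemma mul_exchange (n : ℕ) (M : Matrix (Fin n) (Fin n) ℝ) (j l : Fin n) :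
    (M * exchange n) j l = M j l.rev := by
  rw [Matrix.mul_apply]
  have h : ∀ k : Fin n, exchange n k l = if k = l.rev then 1 else 0 := by
    intro k
    rw [exchange_apply]
    congr 1
    simp only [eq_iff_iff, Fin.ext_iff, Fin.val_rev]
    have := k.isLt; have := l.isLt; omega
  simp [h, mul_ite]

lemma exchange_sq (n : ℕ) : exchange n * exchange n = 1 := by
  ext j l
  rw [exchange_mul, exchange_apply, Fin.rev_rev, Matrix.one_apply]
  by_cases h : j = l
  · simp [h]
  · simp [h, Ne.symm h]

lemma exchange_transpose (n : ℕ) : (exchange n)ᵀ = exchange n := by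
  ext j l
  simp only [Matrix.transpose_apply, exchange, Matrix.of_apply]
  congr 1
  simp only [eq_iff_iff]; omega

lemma stmt4_part2 (n : ℕ) (A AR : Matrix (Fin n) (Fin n) ℝ)
    (hAtoe : exchange n * A * exchange n = Aᵀ)
    (hAR : AR = (1/2 : ℝ) • (A + Aᵀ))
    (S : Matrix (Fin n) (Fin n) ℝ) (hSsymm : S.IsSymm) (hSpd : S.PosDef) (hSsq : S * S = AR)
    (E : Matrix (Fin n) (Fin n) ℝ) (hE : E = S⁻¹ * A * S⁻¹ - 1) :
    (exchange n * E)ᵀ = exchange n * E ∧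
    (exchange n * E) * exchange n = -(exchange n * (exchange n * E)) := by
  set Y := exchange n with hY
  have hYT : Yᵀ = Y := exchange_transpose n
  have hYY : Y * Y = 1 := exchange_sq n
  have hYAt : Y * Aᵀ * Y = A := by
    have h := congrArg Matrix.transpose hAtoe
    rw [Matrix.transpose_mul, Matrix.transpose_mul, hYT, Matrix.transpose_transpose,
      ← Matrix.mul_assoc] at h
    exact h
  have hYARY : Y * AR * Y = AR := by
    rw [hAR, Matrix.mul_smul, Matrix.smul_mul, Matrix.mul_add, Matrix.add_mul, hAtoe, hYAt,
      add_comm]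
  have hT : (Y * S * Y).PosSemidef := by
    have h := hSpd.posSemidef.conjTranspose_mul_mul_same (B := Y)
    rwa [Matrix.conjTranspose_eq_transpose_of_trivial, hYT] at h
  have hYSY : Y * S * Y = S := by
    open scoped MatrixOrder in
    apply (CFC.sq_eq_sq_iff (Y * S * Y) S hT.nonneg hSpd.posSemidef.nonneg).mp
    rw [pow_two, pow_two]
    calc (Y * S * Y) * (Y * S * Y) = Y * S * (Y * Y) * (S * Y) := by
          simp only [Matrix.mul_assoc]
      _ = Y * (S * S) * Y := by rw [hYY, Matrix.mul_one]; simp only [Matrix.mul_assoc]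
      _ = S * S := by rw [hSsq, hYARY, ← hSsq]
  have hYS : Y * S = S * Y := by
    have h := congrArg (· * Y) hYSY
    rwa [Matrix.mul_assoc (Y * S) Y Y, hYY, Matrix.mul_one] at h
  have hdet : IsUnit S.det := hSpd.det_pos.ne'.isUnit
  have hSS : S * S⁻¹ = 1 := Matrix.mul_nonsing_inv S hdet
  have hS'S : S⁻¹ * S = 1 := Matrix.nonsing_inv_mul S hdet
  have hYSinv : Y * S⁻¹ = S⁻¹ * Y := by
    calc Y * S⁻¹ = S⁻¹ * S * (Y * S⁻¹) := by rw [hS'S, Matrix.one_mul]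
      _ = S⁻¹ * (S * Y * S⁻¹) := by simp only [Matrix.mul_assoc]
      _ = S⁻¹ * (Y * S * S⁻¹) := by rw [hYS]
      _ = S⁻¹ * (Y * (S * S⁻¹)) := by simp only [Matrix.mul_assoc]
      _ = S⁻¹ * Y := by rw [hSS, Matrix.mul_one]
  have hSinvsymm : S⁻¹ᵀ = S⁻¹ := by
    rw [Matrix.transpose_nonsing_inv, hSsymm.eq]
  have hARinv : S⁻¹ * AR * S⁻¹ = 1 := by
    rw [← hSsq, ← Matrix.mul_assoc S⁻¹ S S, hS'S, Matrix.one_mul, hSS]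
  have hEK : E = S⁻¹ * (A - AR) * S⁻¹ := by
    rw [hE, Matrix.mul_sub, Matrix.sub_mul, hARinv]
  have hKT : (A - AR)ᵀ = -(A - AR) := by
    rw [Matrix.transpose_sub, hAR]
    simp only [Matrix.transpose_smul, Matrix.transpose_add, Matrix.transpose_transpose]
    module
  have hYKY : Y * (A - AR) * Y = -(A - AR) := by
    rw [Matrix.mul_sub, Matrix.sub_mul, hAtoe, hYARY, hAR]
    module
  have hYK : Y * (A - AR) = -((A - AR) * Y) := by
    have h := congrArg (· * Y) hYKY
    rwa [Matrix.mul_assoc (Y * (A - AR)) Y Y, hYY, Matrix.mul_one, Matrix.neg_mul] at h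
  have hET : Eᵀ = -E := by
    rw [hEK, Matrix.transpose_mul, Matrix.transpose_mul, hSinvsymm, hKT]
    rw [Matrix.neg_mul, Matrix.mul_neg, ← Matrix.mul_assoc]
  have hYE : Y * E = -(E * Y) := by
    rw [hEK, ← Matrix.mul_assoc, ← Matrix.mul_assoc Y S⁻¹ (A - AR), hYSinv,
      Matrix.mul_assoc S⁻¹ Y (A - AR), hYK, Matrix.mul_neg, Matrix.neg_mul]
    simp only [Matrix.mul_assoc]
    rw [hYSinv]
  constructor
  · rw [Matrix.transpose_mul, hET, hYT, Matrix.neg_mul, ← hYE]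
  · conv_rhs => rw [← Matrix.mul_assoc, hYY, Matrix.one_mul]
    rw [hYE, Matrix.neg_mul, Matrix.mul_assoc, hYY, Matrix.mul_one]

lemma cos_int (a : ℤ) : ∫ θ in (-Real.pi)..Real.pi, Real.cos (a * θ) =
    if a = 0 then 2 * Real.pi else 0 := by
  rcases eq_or_ne a 0 with h | h
  · simp [h, two_mul]
  · have ha : (a : ℝ) ≠ 0 := Int.cast_ne_zero.mpr h
    rw [if_neg h, intervalIntegral.integral_comp_mul_left (fun x => Real.cos x) ha]
    simp [integral_cos, mul_neg, Real.sin_neg, Real.sin_int_mul_pi]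

lemma exp_pair (a : ℤ) (θ : ℝ) :
    Complex.exp (-Complex.I * a * θ) + Complex.exp (-Complex.I * (-a : ℤ) * θ)
      = ((2 * Real.cos (a * θ) : ℝ) : ℂ) := by
  have h1 : -Complex.I * (a : ℤ) * (θ : ℝ) = ((-((a : ℝ) * θ) : ℝ) : ℂ) * Complex.I := by
    push_cast; ring
  have h2 : -Complex.I * ((-a : ℤ) : ℂ) * (θ : ℝ) = (((a : ℝ) * θ : ℝ) : ℂ) * Complex.I := by
    push_cast; ring
  rw [h1, h2, Complex.exp_mul_I, Complex.exp_mul_I]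
  push_cast
  rw [Complex.cos_neg, Complex.sin_neg]
  ring

lemma pair_formula (fR fI : ℝ → ℝ) (f : ℝ → ℂ)
    (hf : ∀ θ, f θ = (fR θ : ℂ) + Complex.I * (fI θ : ℂ))
    (hfi : IntervalIntegrable f volume (-Real.pi) Real.pi)
    (hfRi : IntervalIntegrable fR volume (-Real.pi) Real.pi)
    (hfIi : IntervalIntegrable fI volume (-Real.pi) Real.pi)
    (a : ℤ) :
    fCoeff f a + fCoeff f (-a) =
      (1 / (2 * (Real.pi : ℂ))) *
        (((∫ θ in (-Real.pi)..Real.pi, fR θ * (2 * Real.cos (a * θ))) : ℝ)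
          + Complex.I * ((∫ θ in (-Real.pi)..Real.pi, fI θ * (2 * Real.cos (a * θ))) : ℝ)) := by
  have hc : ∀ b : ℤ, Continuous fun θ : ℝ => Complex.exp (-Complex.I * b * θ) := by
    intro b
    apply Complex.continuous_exp.comp
    continuity
  have hexp : ∀ b : ℤ, IntervalIntegrable (fun θ => f θ * Complex.exp (-Complex.I * b * θ))
      volume (-Real.pi) Real.pi := fun b => hfi.mul_continuousOn (hc b).continuousOn
  have hcos : Continuous fun θ : ℝ => 2 * Real.cos (a * θ) := by continuity
  have hR : IntervalIntegrable (fun θ => fR θ * (2 * Real.cos (a * θ))) volume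
      (-Real.pi) Real.pi := hfRi.mul_continuousOn hcos.continuousOn
  have hI : IntervalIntegrable (fun θ => fI θ * (2 * Real.cos (a * θ))) volume
      (-Real.pi) Real.pi := hfIi.mul_continuousOn hcos.continuousOn
  unfold fCoeff
  rw [← mul_add, ← intervalIntegral.integral_add (hexp a) (hexp (-a))]
  congr 1
  rw [show (fun θ => f θ * Complex.exp (-Complex.I * (a : ℤ) * θ)
        + f θ * Complex.exp (-Complex.I * ((-a : ℤ) : ℂ) * θ))
      = fun θ : ℝ => ((fR θ * (2 * Real.cos (a * θ)) : ℝ) : ℂ)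
          + Complex.I * ((fI θ * (2 * Real.cos (a * θ)) : ℝ) : ℂ) from funext fun θ => by
        rw [← mul_add, exp_pair, hf θ]; push_cast; ring]
  have h1 : IntervalIntegrable (fun θ : ℝ => ((fR θ * (2 * Real.cos (a * θ)) : ℝ) : ℂ))
      volume (-Real.pi) Real.pi := ⟨hR.1.ofReal, hR.2.ofReal⟩
  have h2 : IntervalIntegrable
      (fun θ : ℝ => Complex.I * ((fI θ * (2 * Real.cos (a * θ)) : ℝ) : ℂ))
      volume (-Real.pi) Real.pi :=
    ⟨(hI.1.ofReal).const_mul Complex.I, (hI.2.ofReal).const_mul Complex.I⟩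
  rw [intervalIntegral.integral_add h1 h2, intervalIntegral.integral_ofReal,
    intervalIntegral.integral_const_mul, intervalIntegral.integral_ofReal]

lemma posdef_quad (n : ℕ) (fR : ℝ → ℝ)
    (hfRi : IntervalIntegrable fR volume (-Real.pi) Real.pi)
    (hm : 0 < essInf fR (volume.restrict (Set.Icc (-Real.pi) Real.pi)))
    (AR : Matrix (Fin n) (Fin n) ℝ)
    (hARentry : ∀ j k : Fin n, AR j k = (1 / (2 * Real.pi)) *
        ∫ θ in (-Real.pi)..Real.pi, fR θ * Real.cos ((((j : ℤ) - (k : ℤ)) : ℤ) * θ))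
    (x : Fin n → ℝ) (hx : x ≠ 0) :
    0 < x ⬝ᵥ AR *ᵥ x := by
  have hπ : (0:ℝ) < Real.pi := Real.pi_pos
  have hle : -Real.pi ≤ Real.pi := by linarith
  set μ := volume.restrict (Set.Icc (-Real.pi) Real.pi) with hμ
  set m := essInf fR μ with hmdef
  have hbdd : IsBoundedUnder (· ≥ ·) (ae μ) fR := by
    by_contra hb
    have h0 : m = 0 := by
      have hset : {a : ℝ | ∀ᶠ y in Filter.map fR (ae μ), a ≤ y} = ∅ := by
        ext a
        simp only [Set.mem_setOf_eq, Set.mem_empty_iff_false, iff_false]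
        intro h'
        exact hb ⟨a, h'⟩
      rw [hmdef, essInf, Filter.liminf, Filter.limsInf, hset, Real.sSup_empty]
    rw [h0] at hm
    exact lt_irrefl 0 hm
  have hae : ∀ᵐ θ ∂μ, m / 2 < fR θ := ae_lt_of_lt_essInf (by linarith) hbdd
  have hcoscont : ∀ c : ℝ, Continuous fun θ : ℝ => Real.cos (c * θ) :=
    fun c => Real.continuous_cos.comp (continuous_const.mul continuous_id)
  set F : ℝ → ℝ := fun θ => ∑ j : Fin n, ∑ k : Fin n,
      x j * x k * Real.cos ((((j : ℤ) - (k : ℤ)) : ℤ) * θ) with hFdef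
  have hFcont : Continuous F := by
    apply continuous_finset_sum; intro j _
    apply continuous_finset_sum; intro k _
    exact continuous_const.mul (hcoscont _)
  have hFnn : ∀ θ, 0 ≤ F θ := by
    intro θ
    have hFval : F θ = (∑ j : Fin n, x j * Real.cos ((j : ℕ) * θ))^2
        + (∑ j : Fin n, x j * Real.sin ((j : ℕ) * θ))^2 := by
      rw [hFdef]
      simp only [pow_two, Finset.sum_mul_sum, ← Finset.sum_add_distrib]
      refine Finset.sum_congr rfl fun j _ => Finset.sum_congr rfl fun k _ => ?_
      rw [show ((((j : ℤ) - (k : ℤ)) : ℤ) : ℝ) * θ = (j : ℕ) * θ - (k : ℕ) * θ by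
        push_cast; ring, Real.cos_sub]
      ring
    rw [hFval]; positivity
  have hterm : ∀ (j k : Fin n), IntervalIntegrable
      (fun θ => x j * x k * Real.cos ((((j : ℤ) - (k : ℤ)) : ℤ) * θ)) volume
      (-Real.pi) Real.pi := by
    intro j k
    exact (continuous_const.mul (hcoscont _)).intervalIntegrable _ _
  have hintF : ∫ θ in (-Real.pi)..Real.pi, F θ = 2 * Real.pi * ∑ j : Fin n, x j ^ 2 := by
    simp only [hFdef]
    rw [intervalIntegral.integral_finset_sum (fun j _ => by
      apply Continuous.intervalIntegrable
      apply continuous_finset_sum; intro k _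
      exact continuous_const.mul (hcoscont _))]
    have hinner : ∀ j : Fin n,
        (∫ θ in (-Real.pi)..Real.pi, ∑ k : Fin n,
          x j * x k * Real.cos ((((j : ℤ) - (k : ℤ)) : ℤ) * θ)) = x j * x j * (2 * Real.pi) := by
      intro j
      rw [intervalIntegral.integral_finset_sum (fun k _ => hterm j k)]
      rw [Finset.sum_eq_single j]
      · rw [intervalIntegral.integral_const_mul, cos_int, sub_self, if_pos rfl]
      · intro k _ hk
        rw [intervalIntegral.integral_const_mul, cos_int, if_neg, mul_zero]
        have hne : (j : ℕ) ≠ (k : ℕ) := fun h => hk (Fin.ext h.symm)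
        omega
      · intro h; exact absurd (Finset.mem_univ j) h
    rw [Finset.sum_congr rfl fun j _ => hinner j, Finset.mul_sum]
    refine Finset.sum_congr rfl fun j _ => ?_
    ring
  have hmul : IntervalIntegrable (fun θ => fR θ * F θ) volume (-Real.pi) Real.pi :=
    hfRi.mul_continuousOn hFcont.continuousOn
  have hlow : IntervalIntegrable (fun θ => m / 2 * F θ) volume (-Real.pi) Real.pi :=
    (continuous_const.mul hFcont).intervalIntegrable _ _
  have hcomp : (∫ θ in (-Real.pi)..Real.pi, m / 2 * F θ)
      ≤ ∫ θ in (-Real.pi)..Real.pi, fR θ * F θ :=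
    intervalIntegral.integral_mono_ae_restrict hle hlow hmul
      (hae.mono fun θ hθ => mul_le_mul_of_nonneg_right hθ.le (hFnn θ))
  rw [intervalIntegral.integral_const_mul, hintF] at hcomp
  have hQ : x ⬝ᵥ AR *ᵥ x = (1 / (2 * Real.pi)) * ∫ θ in (-Real.pi)..Real.pi, fR θ * F θ := by
    have hptwise : ∀ j k : Fin n, x j * (AR j k * x k)
        = (1 / (2 * Real.pi)) * ∫ θ in (-Real.pi)..Real.pi,
            fR θ * (x j * x k * Real.cos ((((j : ℤ) - (k : ℤ)) : ℤ) * θ)) := by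
      intro j k
      rw [hARentry j k]
      have h1 : (∫ θ in (-Real.pi)..Real.pi,
            (x j * x k) * (fR θ * Real.cos ((((j : ℤ) - (k : ℤ)) : ℤ) * θ)))
          = (x j * x k) * ∫ θ in (-Real.pi)..Real.pi,
            fR θ * Real.cos ((((j : ℤ) - (k : ℤ)) : ℤ) * θ) :=
        intervalIntegral.integral_const_mul _ _
      calc x j * ((1 / (2 * Real.pi)) * (∫ θ in (-Real.pi)..Real.pi,
              fR θ * Real.cos ((((j : ℤ) - (k : ℤ)) : ℤ) * θ)) * x k)
          = (1 / (2 * Real.pi)) * ((x j * x k) * ∫ θ in (-Real.pi)..Real.pi,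
              fR θ * Real.cos ((((j : ℤ) - (k : ℤ)) : ℤ) * θ)) := by ring
        _ = (1 / (2 * Real.pi)) * ∫ θ in (-Real.pi)..Real.pi,
              (x j * x k) * (fR θ * Real.cos ((((j : ℤ) - (k : ℤ)) : ℤ) * θ)) := by rw [h1]
        _ = (1 / (2 * Real.pi)) * ∫ θ in (-Real.pi)..Real.pi,
              fR θ * (x j * x k * Real.cos ((((j : ℤ) - (k : ℤ)) : ℤ) * θ)) := by
            congr 1
            apply intervalIntegral.integral_congr
            intro θ _
            ring
    have hjk_int : ∀ j k : Fin n, IntervalIntegrable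
        (fun θ => fR θ * (x j * x k * Real.cos ((((j : ℤ) - (k : ℤ)) : ℤ) * θ))) volume
        (-Real.pi) Real.pi :=
      fun j k => hfRi.mul_continuousOn (continuous_const.mul (hcoscont _)).continuousOn
    simp only [dotProduct, Matrix.mulVec, Finset.mul_sum]
    rw [Finset.sum_congr rfl (fun j _ => Finset.sum_congr rfl (fun k _ => hptwise j k))]
    simp only [← Finset.mul_sum]
    congr 1
    have hsum_int : ∀ j : Fin n, IntervalIntegrable
        (fun θ => ∑ k : Fin n, fR θ * (x j * x k * Real.cos ((((j : ℤ) - (k : ℤ)) : ℤ) * θ)))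
        volume (-Real.pi) Real.pi := by
      intro j
      have h := IntervalIntegrable.sum Finset.univ (fun k (_ : k ∈ Finset.univ) => hjk_int j k)
      simpa only [Finset.sum_fn] using h
    rw [Finset.sum_congr rfl (fun j _ => (intervalIntegral.integral_finset_sum
      (fun k _ => hjk_int j k)).symm)]
    rw [← intervalIntegral.integral_finset_sum (fun j _ => hsum_int j)]
    apply intervalIntegral.integral_congr
    intro θ _
    simp only [hFdef, Finset.mul_sum]
  have hxpos : 0 < ∑ j : Fin n, x j ^ 2 := by
    obtain ⟨j, hj⟩ := Function.ne_iff.mp hx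
    exact Finset.sum_pos' (fun i _ => sq_nonneg _) ⟨j, Finset.mem_univ j, by rw [sq]; exact mul_self_pos.mpr hj⟩
  rw [hQ]
  have h1 : 0 < m / 2 * (2 * Real.pi * ∑ j : Fin n, x j ^ 2) :=
    mul_pos (by linarith) (by positivity)
  exact mul_pos (by positivity) (lt_of_lt_of_le h1 hcomp)

lemma real_pair (fR fI : ℝ → ℝ) (f : ℝ → ℂ)
    (hf : ∀ θ, f θ = (fR θ : ℂ) + Complex.I * (fI θ : ℂ))
    (hfi : IntervalIntegrable f volume (-Real.pi) Real.pi)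
    (hfRi : IntervalIntegrable fR volume (-Real.pi) Real.pi)
    (hfIi : IntervalIntegrable fI volume (-Real.pi) Real.pi)
    (a : ℤ) (p q : ℝ) (hp : (p : ℂ) = fCoeff f a) (hq : (q : ℂ) = fCoeff f (-a)) :
    p + q = (1 / (2 * Real.pi)) *
      ∫ θ in (-Real.pi)..Real.pi, fR θ * (2 * Real.cos (a * θ)) := by
  have h := pair_formula fR fI f hf hfi hfRi hfIi a
  rw [← hp, ← hq] at h
  have hcoef : (1 / (2 * (Real.pi : ℂ))) = (((1 / (2 * Real.pi) : ℝ)) : ℂ) := by push_cast; ring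
  rw [hcoef] at h
  have h2 := congrArg Complex.re h
  simpa using h2

/-- With `A_R = A_n(f_R)`, `E = A_R^{-1/2} A_n(f) A_R^{-1/2} - I` and `Y` the
exchange matrix, the matrix `Y E` is symmetric and skew-centrosymmetric. -/
theorem stmt4 (n : ℕ) (fR fI : ℝ → ℝ) (f : ℝ → ℂ)
    (hf : ∀ θ, f θ = (fR θ : ℂ) + Complex.I * (fI θ : ℂ))
    (hfint : IntegrableOn f (Set.Icc (-Real.pi) Real.pi))
    (hpos : 0 < essInf fR (volume.restrict (Set.Icc (-Real.pi) Real.pi)))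
    (A : Matrix (Fin n) (Fin n) ℝ)
    (hA : ∀ j k, (A j k : ℂ) = toeplitzC n f j k)
    (AR : Matrix (Fin n) (Fin n) ℝ)
    (hAR : AR = (1 / 2 : ℝ) • (A + Aᵀ)) :
    AR.PosDef ∧
    ∀ S : Matrix (Fin n) (Fin n) ℝ, S.IsSymm → S.PosDef → S * S = AR →
      ∀ E : Matrix (Fin n) (Fin n) ℝ, E = S⁻¹ * A * S⁻¹ - 1 →
        (exchange n * E)ᵀ = exchange n * E ∧
        (exchange n * E) * exchange n = -(exchange n * (exchange n * E)) := by
  have hπ : (0:ℝ) < Real.pi := Real.pi_pos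
  have hle : -Real.pi ≤ Real.pi := by linarith
  have hfi : IntervalIntegrable f volume (-Real.pi) Real.pi := by
    rw [intervalIntegrable_iff, Set.uIoc_of_le hle]
    exact hfint.mono_set Set.Ioc_subset_Icc_self
  have hIoc : IntegrableOn f (Set.Ioc (-Real.pi) Real.pi) :=
    hfint.mono_set Set.Ioc_subset_Icc_self
  have hfRi : IntervalIntegrable fR volume (-Real.pi) Real.pi := by
    rw [intervalIntegrable_iff, Set.uIoc_of_le hle]
    exact hIoc.re.congr (ae_of_all _ fun θ => by
      show RCLike.re (f θ) = fR θ
      rw [hf θ]; simp)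
  have hfIi : IntervalIntegrable fI volume (-Real.pi) Real.pi := by
    rw [intervalIntegrable_iff, Set.uIoc_of_le hle]
    exact hIoc.im.congr (ae_of_all _ fun θ => by
      show RCLike.im (f θ) = fI θ
      rw [hf θ]; simp)
  have hARentry : ∀ j k : Fin n, AR j k = (1 / (2 * Real.pi)) *
      ∫ θ in (-Real.pi)..Real.pi, fR θ * Real.cos ((((j : ℤ) - (k : ℤ)) : ℤ) * θ) := by
    intro j k
    have hp : ((A j k : ℝ) : ℂ) = fCoeff f ((j : ℤ) - (k : ℤ)) := hA j k
    have hq : ((A k j : ℝ) : ℂ) = fCoeff f (-((j : ℤ) - (k : ℤ))) := by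
      rw [hA k j]
      simp only [toeplitzC, Matrix.of_apply]
      congr 1
      ring
    have h := real_pair fR fI f hf hfi hfRi hfIi ((j : ℤ) - (k : ℤ)) _ _ hp hq
    have h2 : (∫ θ in (-Real.pi)..Real.pi,
          fR θ * (2 * Real.cos ((((j : ℤ) - (k : ℤ)) : ℤ) * θ)))
        = 2 * ∫ θ in (-Real.pi)..Real.pi,
          fR θ * Real.cos ((((j : ℤ) - (k : ℤ)) : ℤ) * θ) := by
      rw [← intervalIntegral.integral_const_mul]
      apply intervalIntegral.integral_congr
      intro θ _
      ring
    have h3 : AR j k = (1/2) * (A j k + A k j) := by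
      rw [hAR]
      simp [Matrix.smul_apply, Matrix.add_apply, Matrix.transpose_apply]
    rw [h3, h, h2]
    ring
  have hARherm : AR.IsHermitian := by
    have ht : ARᵀ = AR := by
      rw [hAR]
      simp only [Matrix.transpose_smul, Matrix.transpose_add, Matrix.transpose_transpose]
      rw [add_comm]
    rw [Matrix.IsHermitian, Matrix.conjTranspose_eq_transpose_of_trivial, ht]
  have hpd : AR.PosDef := by
    refine Matrix.PosDef.of_dotProduct_mulVec_pos hARherm fun x hx => ?_
    have hstar : star x = x := rfl
    rw [hstar]
    exact posdef_quad n fR hfRi hpos AR hARentry x hx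
  refine ⟨hpd, fun S hSsymm hSpd hSsq E hE => ?_⟩
  have hAtoe : exchange n * A * exchange n = Aᵀ := by
    ext j l
    rw [mul_exchange, exchange_mul, Matrix.transpose_apply]
    apply Complex.ofReal_injective
    rw [hA, hA]
    simp only [toeplitzC, Matrix.of_apply]
    congr 1
    simp only [Fin.val_rev]
    have := j.isLt; have := l.isLt
    omega
  exact stmt4_part2 n A AR hAtoe hAR S hSsymm hSpd hSsq E hE
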